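/- Let G = ⟨a₁, …, a_k, t | a_j t a_j⁻¹ = t⁻¹ for all j, a₁²⋯a_k² = t^{k-2}⟩ and let f : G → G^{ab} be the abelianization map. If k is even, then the image of t in G^{ab} has order exactly 2. -/

import Mathlib

/-- Relations for the presentation of π₁(ST*N_k). -/
def stRels (k : ℕ) : Set (FreeGroup (Fin k ⊕ Unit)) :=
  {r | (∃ j : Fin k, r = FreeGroup.of (Sum.inl j) * FreeGroup.of (Sum.inr ()) *
        (FreeGroup.of (Sum.inl j))⁻¹ * FreeGroup.of (Sum.inr ())) ∨
    r = (List.ofFn fun j : Fin k => (FreeGroup.of (Sum.inl j)) ^ 2).prod *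
        (FreeGroup.of (Sum.inr ()) : FreeGroup (Fin k ⊕ Unit)) ^ (-((k : ℤ) - 2))}

private def stF (k : ℕ) : Fin k ⊕ Unit → Multiplicative (ZMod 2) :=
  Sum.elim (fun _ => 1) (fun _ => Multiplicative.ofAdd 1)

private lemma stF_rels (k : ℕ) (he : Even k) :
    ∀ r ∈ stRels k, FreeGroup.lift (stF k) r = 1 := by
  rintro r (⟨j, rfl⟩ | rfl)
  · simp [stF, ← ofAdd_add]
    decide
  · rw [map_mul, map_zpow, map_list_prod]
    have h1 : ∀ j : Fin k,
        (FreeGroup.lift (stF k)) (FreeGroup.of (Sum.inl j) ^ 2) = 1 := by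
      intro j; simp [stF]
    simp only [List.map_ofFn, Function.comp]
    rw [List.prod_ofFn]
    simp only [Function.comp_apply, h1, Finset.prod_const_one, one_mul, FreeGroup.lift_apply_of]
    show (stF k (Sum.inr ())) ^ (-((k : ℤ) - 2)) = 1
    rw [show stF k (Sum.inr ()) = Multiplicative.ofAdd 1 from rfl, ← ofAdd_zsmul]
    obtain ⟨m, rfl⟩ := he
    have h0 : ((-(((m + m : ℕ) : ℤ) - 2)) • (1 : ZMod 2)) = 0 := by
      rw [zsmul_eq_mul, mul_one]
      push_cast
      have h2 : (2 : ZMod 2) = 0 := rfl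
      linear_combination (1 - (m : ZMod 2)) * h2
    rw [h0]; rfl

/-- For k even, the image of t under the abelianization map
G → G^{ab} has order exactly 2. -/
theorem orderOf_abelianization_t_even (k : ℕ) (hk : 1 ≤ k) (he : Even k) :
    orderOf (Abelianization.of
      (PresentedGroup.of (Sum.inr ()) : PresentedGroup (stRels k))) = 2 := by
  set t : PresentedGroup (stRels k) := PresentedGroup.of (Sum.inr ())
  set y := Abelianization.of t with hy
  have h2 : y ^ 2 = 1 := by
    have j0 : Fin k := ⟨0, hk⟩
    have hmem : (FreeGroup.of (Sum.inl j0) * FreeGroup.of (Sum.inr ()) *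
        (FreeGroup.of (Sum.inl j0))⁻¹ * FreeGroup.of (Sum.inr ())) ∈ stRels k :=
      Or.inl ⟨j0, rfl⟩
    have hrel : (PresentedGroup.of (Sum.inl j0) : PresentedGroup (stRels k)) * t *
        (PresentedGroup.of (Sum.inl j0))⁻¹ * t = 1 := by
      have : ((QuotientGroup.mk (FreeGroup.of (Sum.inl j0) * FreeGroup.of (Sum.inr ()) *
          (FreeGroup.of (Sum.inl j0))⁻¹ * FreeGroup.of (Sum.inr ()))) :
          PresentedGroup (stRels k)) = 1 := by
        rw [QuotientGroup.eq_one_iff]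
        exact Subgroup.subset_normalClosure hmem
      exact this
    have := congrArg Abelianization.of hrel
    simp only [map_mul, map_inv, map_one] at this
    set x := Abelianization.of (PresentedGroup.of (Sum.inl j0) : PresentedGroup (stRels k))
    calc y ^ 2 = x * y * x⁻¹ * y := by rw [mul_comm x y, sq]; group
    _ = 1 := this
  have hne : y ≠ 1 := by
    intro h1
    have := congrArg (Abelianization.lift (PresentedGroup.toGroup (stF_rels k he))) h1
    simp only [Abelianization.lift_apply_of, map_one, hy] at this
    rw [PresentedGroup.toGroup.of] at this
    simp [stF] at this
  exact orderOf_eq_prime h2 hne
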